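/- Let G be a finite group with a subgroup G_1 of index n in G such that G_1 is maximal in G and C_G(O_3(G_1)) ≤ G_1, where G_1 ≅ Sym(3). If G is not simple and has a proper non-trivial normal subgroup R with G = G_1 R and C_R(G_1) = 1, then R is nilpotent. -/
import Mathlib

/-- **Burnside/Neumann**: a finite group admitting a fixed-point-free automorphism `α`
with `α ∘ α ∘ α = id` has all commutators central, hence is nilpotent (of class ≤ 2). -/
theorem fpf3_nilpotent {H : Type*} [Group H] [Finite H] (α : H ≃* H)
    (h3 : ∀ x : H, α (α (α x)) = x) (hfpf : ∀ x : H, α x = x → x = 1) :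
    Group.IsNilpotent H := by
  -- x ↦ x⁻¹ * α x is surjective
  have hsurj : Function.Surjective (fun x : H => x⁻¹ * α x) := by
    apply Finite.surjective_of_injective
    intro x y h
    simp only at h
    have hx : α x = x * (y⁻¹ * α y) := by rw [← h]; group
    have h2 : α (y * x⁻¹) = y * x⁻¹ := by
      rw [map_mul, map_inv, hx]; group
    have h1 : y * x⁻¹ = 1 := hfpf _ h2
    have := mul_inv_eq_one.mp h1
    exact this.symm
  -- (B) : ∀ g, g * α g * α (α g) = 1
  have hB : ∀ g : H, g * α g * α (α g) = 1 := by
    intro g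
    obtain ⟨x, hx⟩ := hsurj g
    simp only at hx
    rw [← hx]
    simp only [map_mul, map_inv, h3]
    group
  -- commuting facts
  have hCr : ∀ g : H, α g * α (α g) = g⁻¹ := by
    intro g
    have h1 := hB g
    rw [mul_assoc] at h1
    exact (inv_eq_of_mul_eq_one_right h1).symm
  have hCl : ∀ g : H, α (α g) * α g = g⁻¹ := by
    intro g
    have h1 := hB g⁻¹
    simp only [map_inv] at h1
    have h4 : α (α g) * α g * g = 1 := by
      have h5 := congrArg (·⁻¹) h1
      simp only [inv_one] at h5
      rw [← h5]; group
    exact eq_inv_of_mul_eq_one_left h4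
  have hcomm2 : ∀ g : H, α g * α (α g) = α (α g) * α g := fun g => by rw [hCr, hCl]
  have hcomm : ∀ g : H, g * α g = α g * g := by
    intro g
    have h1 := hcomm2 (α (α g))
    simpa only [h3] using h1
  -- (I) : product commuting identity
  have hI : ∀ x y : H, x * y * α x * α y = α x * α y * (x * y) := by
    intro x y
    have h1 := hcomm (x * y)
    simp only [map_mul] at h1
    simp only [mul_assoc] at h1 ⊢
    exact h1
  -- (N)
  have hN : ∀ x y : H, (α x)⁻¹ * y * α x * α y = x⁻¹ * α y * x * y := by
    intro x y
    have hc : x⁻¹ * α x = α x * x⁻¹ := by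
      have h1 : Commute x (α x) := hcomm x
      exact h1.inv_left.eq
    calc (α x)⁻¹ * y * α x * α y
        = (α x)⁻¹ * x⁻¹ * (x * y * α x * α y) := by group
      _ = (α x)⁻¹ * x⁻¹ * (α x * α y * (x * y)) := by rw [hI x y]
      _ = (α x)⁻¹ * (x⁻¹ * α x) * α y * (x * y) := by group
      _ = (α x)⁻¹ * (α x * x⁻¹) * α y * (x * y) := by rw [hc]
      _ = x⁻¹ * α y * x * y := by group
  -- (M)
  have hM : ∀ z y : H, z⁻¹ * α y * z * (α y)⁻¹ = (α z)⁻¹ * y * α z * y⁻¹ := by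
    intro z y
    have e1 := hN z y
    have hc2 : α y * y⁻¹ = y⁻¹ * α y := by
      have h1 : Commute y (α y) := hcomm y
      exact h1.symm.inv_right.eq
    calc z⁻¹ * α y * z * (α y)⁻¹
        = z⁻¹ * α y * z * y * (y⁻¹ * (α y)⁻¹) := by group
      _ = (α z)⁻¹ * y * α z * α y * (y⁻¹ * (α y)⁻¹) := by rw [← e1]
      _ = (α z)⁻¹ * y * α z * (α y * y⁻¹) * (α y)⁻¹ := by group
      _ = (α z)⁻¹ * y * α z * (y⁻¹ * α y) * (α y)⁻¹ := by rw [hc2]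
      _ = (α z)⁻¹ * y * α z * y⁻¹ := by group
  -- all elements z⁻¹ * α y * z * (α y)⁻¹ are central
  have hcen : ∀ z y : H, (z⁻¹ * α y * z * (α y)⁻¹) ∈ Subgroup.center H := by
    intro z y
    rw [Subgroup.mem_center_iff]
    have key : ∀ w : H, w⁻¹ * (z⁻¹ * α y * z * (α y)⁻¹) * w
        = (α w)⁻¹ * (z⁻¹ * α y * z * (α y)⁻¹) * α w := by
      intro w
      calc w⁻¹ * (z⁻¹ * α y * z * (α y)⁻¹) * w
          = ((z*w)⁻¹ * α y * (z*w) * (α y)⁻¹) * (w⁻¹ * α y * w * (α y)⁻¹)⁻¹ := by group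
        _ = ((α (z*w))⁻¹ * y * α (z*w) * y⁻¹) * ((α w)⁻¹ * y * α w * y⁻¹)⁻¹ := by
            rw [hM (z*w) y, hM w y]
        _ = (α w)⁻¹ * ((α z)⁻¹ * y * α z * y⁻¹) * α w := by rw [map_mul]; group
        _ = (α w)⁻¹ * (z⁻¹ * α y * z * (α y)⁻¹) * α w := by rw [← hM z y]
    -- w ↦ α w * w⁻¹ is surjective
    have hsurj2 : Function.Surjective (fun w : H => α w * w⁻¹) := by
      apply Finite.surjective_of_injective
      intro v w h
      simp only at h
      have hw : α w = α v * v⁻¹ * w := by rw [h]; group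
      have h2 : α (v⁻¹ * w) = v⁻¹ * w := by rw [map_mul, map_inv, hw]; group
      exact inv_mul_eq_one.mp (hfpf _ h2)
    intro t
    obtain ⟨w, hw⟩ := hsurj2 t
    simp only at hw
    rw [← hw]
    calc α w * w⁻¹ * (z⁻¹ * α y * z * (α y)⁻¹)
        = α w * (w⁻¹ * (z⁻¹ * α y * z * (α y)⁻¹) * w) * w⁻¹ := by group
      _ = α w * ((α w)⁻¹ * (z⁻¹ * α y * z * (α y)⁻¹) * α w) * w⁻¹ := by rw [key w]
      _ = (z⁻¹ * α y * z * (α y)⁻¹) * (α w * w⁻¹) := by group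
  -- commutators are central
  have hcc : ∀ a b : H, a * b * a⁻¹ * b⁻¹ ∈ Subgroup.center H := by
    intro a b
    have h1 := hcen a⁻¹ (α (α b))
    rwa [h3, inv_inv] at h1
  refine ⟨2, ?_⟩
  rw [eq_top_iff]
  intro x _
  rw [mem_upperCentralSeries_succ_iff]
  intro y
  rw [upperCentralSeries_one]
  exact hcc x y

theorem stmt18 {G : Type*} [Group G] [Finite G] (G1 R Q : Subgroup G)
    (hS3 : Nonempty (↥G1 ≃* Equiv.Perm (Fin 3)))
    (hmax : IsCoatom G1)
    (hQle : Q ≤ G1) (hQcard : Nat.card ↥Q = 3) (hQ3 : IsPGroup 3 ↥Q)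
    (hQnorm : ∀ g ∈ G1, ∀ q ∈ Q, g * q * g⁻¹ ∈ Q)
    (hcent : Subgroup.centralizer (Q : Set G) ≤ G1)
    (hnotsimple : ¬ IsSimpleGroup G)
    (hRnormal : R.Normal) (hRne : R ≠ ⊥) (hRproper : R ≠ ⊤)
    (hprod : G1 ⊔ R = ⊤) (hint : G1 ⊓ R = ⊥)
    (hCR : Subgroup.centralizer (G1 : Set G) ⊓ R = ⊥) :
    Group.IsNilpotent ↥R := by
  classical
  -- obtain a generator q of Q, of order 3
  have hQbot : Q ≠ ⊥ := by
    intro h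
    rw [h] at hQcard
    simp [Nat.card_eq_one_iff_unique] at hQcard
  obtain ⟨q, hqQ, hqne⟩ := Q.bot_or_exists_ne_one.resolve_left hQbot
  have hdvd : orderOf (⟨q, hqQ⟩ : Q) ∣ 3 := hQcard ▸ orderOf_dvd_natCard _
  have hordq : orderOf q = 3 := by
    rw [← Subgroup.orderOf_coe (⟨q, hqQ⟩ : Q)] at *
    rcases (Nat.Prime.eq_one_or_self_of_dvd (by norm_num) _ hdvd) with h | h
    · exact absurd (orderOf_eq_one_iff.mp h) hqne
    · exact h
  have hq3 : q ^ 3 = 1 := by rw [← hordq]; exact pow_orderOf_eq_one q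
  -- Q = ⟨q⟩
  have hQeq : Subgroup.zpowers q = Q := by
    apply Subgroup.eq_of_le_of_card_ge (Subgroup.zpowers_le.mpr hqQ)
    rw [hQcard, Nat.card_zpowers, hordq]
  -- the automorphism of R given by conjugation by q
  haveI : R.Normal := hRnormal
  set α : ↥R ≃* ↥R := MulAut.conjNormal q with hα
  have h3 : ∀ x : ↥R, α (α (α x)) = x := by
    intro x
    apply Subtype.ext
    show q * (q * (q * (x : G) * q⁻¹) * q⁻¹) * q⁻¹ = (x : G)
    have hq3' : q * q * q = 1 := by
      rw [← hq3, pow_succ, pow_succ, pow_one]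
    calc q * (q * (q * (x : G) * q⁻¹) * q⁻¹) * q⁻¹
        = (q * q * q) * (x : G) * (q * q * q)⁻¹ := by group
      _ = (x : G) := by rw [hq3']; group
  have hfpf : ∀ x : ↥R, α x = x → x = 1 := by
    intro x hx
    have hx' : q * (x : G) * q⁻¹ = (x : G) := congrArg Subtype.val hx
    have hcq : Commute q (x : G) := by
      have := mul_inv_eq_iff_eq_mul.mp hx'
      exact this
    have hxcent : (x : G) ∈ Subgroup.centralizer (Q : Set G) := by
      rw [Subgroup.mem_centralizer_iff]
      intro s hs
      rw [← hQeq] at hs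
      obtain ⟨n, rfl⟩ := hs
      exact (hcq.zpow_left n).eq
    have hmem : (x : G) ∈ G1 ⊓ R := ⟨hcent hxcent, x.2⟩
    rw [hint, Subgroup.mem_bot] at hmem
    exact Subtype.ext hmem
  exact fpf3_nilpotent α h3 hfpf
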